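/- Let C be a real symmetric positive semidefinite n×n matrix. Then the function X ↦ log det(X) − log det(X + C) is concave on the convex set of real symmetric positive definite n×n matrices: for any positive definite X, Y and any θ ∈ [0,1], log det(θX + (1−θ)Y) − log det(θX + (1−θ)Y + C) ≥ θ·(log det X − log det(X + C)) + (1−θ)·(log det Y − log det(Y + C)). -/

import Mathlib

open Matrix

variable {n : ℕ}

private lemma aux_row_mul_col (M : Matrix (Fin n) (Fin n) ℝ) (u v : Fin n → ℝ) :
    replicateRow Unit u * M * replicateCol Unit v = (u ⬝ᵥ M *ᵥ v) • 1 := by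
  ext i j
  simp [Matrix.mul_apply, Matrix.mulVec, dotProduct, Finset.mul_sum, Finset.sum_mul,
    mul_assoc]
  rw [Finset.sum_comm]

private lemma aux_trace_rank_one (M : Matrix (Fin n) (Fin n) ℝ) (v w : Fin n → ℝ) :
    (replicateCol Unit v * replicateRow Unit w * M).trace = w ⬝ᵥ M *ᵥ v := by
  rw [Matrix.mul_assoc, Matrix.trace_mul_comm, aux_row_mul_col]
  simp

private lemma aux_dot_symm (M : Matrix (Fin n) (Fin n) ℝ) (hM : Mᵀ = M) (a b : Fin n → ℝ) :
    b ⬝ᵥ M *ᵥ a = a ⬝ᵥ M *ᵥ b := by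
  rw [Matrix.dotProduct_mulVec a M b, ← Matrix.mulVec_transpose, hM, dotProduct_comm]

private lemma aux_transpose_eq (M : Matrix (Fin n) (Fin n) ℝ) (hM : M.IsHermitian) :
    Mᵀ = M := by
  rw [← Matrix.conjTranspose_eq_transpose_of_trivial]; exact hM.eq

private lemma aux_sandwich (A M : Matrix (Fin n) (Fin n) ℝ) (v : Fin n → ℝ) :
    (M *ᵥ v) ⬝ᵥ (A *ᵥ (M *ᵥ v)) = v ⬝ᵥ ((Mᵀ * A * M) *ᵥ v) := by
  rw [mulVec_mulVec, dotProduct_comm, Matrix.dotProduct_mulVec, dotProduct_comm,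
    ← Matrix.mulVec_transpose, mulVec_mulVec]
  congr 2
  rw [Matrix.mul_assoc]

private lemma aux_cs (X : Matrix (Fin n) (Fin n) ℝ) (hX : X.PosDef) (a b : Fin n → ℝ) :
    (a ⬝ᵥ X *ᵥ b) ^ 2 ≤ (a ⬝ᵥ X *ᵥ a) * (b ⬝ᵥ X *ᵥ b) := by
  have hXt : Xᵀ = X := aux_transpose_eq X hX.isHermitian
  have key : ∀ t : ℝ, 0 ≤ (b ⬝ᵥ X *ᵥ b) * (t * t) + (2 * (a ⬝ᵥ X *ᵥ b)) * t + (a ⬝ᵥ X *ᵥ a) := by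
    intro t
    have h := hX.posSemidef.dotProduct_mulVec_nonneg (a + t • b)
    simp only [star_trivial, mulVec_add, mulVec_smul, dotProduct_add, add_dotProduct,
      dotProduct_smul, smul_dotProduct, smul_eq_mul] at h
    rw [aux_dot_symm X hXt a b] at h
    nlinarith [h]
  have h := discrim_le_zero key
  rw [discrim] at h
  nlinarith [h]

private lemma aux_scalar (p q r : ℝ) (hp : 0 < p) (hq : 0 < q) (hcs : q ^ 2 ≤ p * (q + r)) :
    -((1 + q)⁻¹ * r) ≤ Real.log (1 + p) - Real.log (1 + q) := by
  have h1p : (0:ℝ) < 1 + p := by linarith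
  have h1q : (0:ℝ) < 1 + q := by linarith
  have hlog : Real.log ((1 + q) / (1 + p)) ≤ (1 + q) / (1 + p) - 1 :=
    Real.log_le_sub_one_of_pos (by positivity)
  rw [Real.log_div h1q.ne' h1p.ne'] at hlog
  have e1 : 1 - (1 + q) / (1 + p) = (p - q) / (1 + p) := by field_simp; ring
  have key : -r / (1 + q) ≤ (p - q) / (1 + p) := by
    rw [div_le_div_iff₀ h1q h1p]
    nlinarith [hcs, sq_nonneg (p - q), mul_pos hp hq, hp, hq]
  have e2 : -((1 + q)⁻¹ * r) = -r / (1 + q) := by ring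
  linarith

private lemma aux_inv_rank_one (Z : Matrix (Fin n) (Fin n) ℝ) (hZ : Z.PosDef) (v : Fin n → ℝ)
    (hq : 0 ≤ v ⬝ᵥ Z⁻¹ *ᵥ v) :
    (Z + replicateCol Unit v * replicateRow Unit v)⁻¹ =
      Z⁻¹ - (1 + v ⬝ᵥ Z⁻¹ *ᵥ v)⁻¹ • (Z⁻¹ * (replicateCol Unit v * replicateRow Unit v) * Z⁻¹) := by
  set q := v ⬝ᵥ Z⁻¹ *ᵥ v with hqdef
  have h1q : (0:ℝ) < 1 + q := by linarith
  have hdet : IsUnit Z.det := hZ.det_pos.ne'.isUnit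
  have hZZ : Z * Z⁻¹ = 1 := Matrix.mul_nonsing_inv Z hdet
  apply Matrix.inv_eq_right_inv
  set V : Matrix (Fin n) (Fin n) ℝ := replicateCol Unit v * replicateRow Unit v with hV
  have hVZV : V * (Z⁻¹ * V) = q • V := by
    rw [hV]
    calc replicateCol Unit v * replicateRow Unit v * (Z⁻¹ * (replicateCol Unit v * replicateRow Unit v))
        = replicateCol Unit v * (replicateRow Unit v * Z⁻¹ * replicateCol Unit v) * replicateRow Unit v := by
          simp only [Matrix.mul_assoc]
      _ = q • (replicateCol Unit v * replicateRow Unit v) := by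
          rw [aux_row_mul_col, Matrix.mul_smul, Matrix.smul_mul, Matrix.mul_one, ← hqdef]
  have hZmul : Z * (Z⁻¹ * V * Z⁻¹) = V * Z⁻¹ := by
    rw [← Matrix.mul_assoc, ← Matrix.mul_assoc, hZZ, Matrix.one_mul]
  have hVmul : V * (Z⁻¹ * V * Z⁻¹) = q • (V * Z⁻¹) := by
    rw [← Matrix.mul_assoc, hVZV]
    rw [Matrix.smul_mul]
  rw [Matrix.add_mul, Matrix.mul_sub, Matrix.mul_sub, hZZ, Matrix.mul_smul, Matrix.mul_smul,
    hZmul, hVmul]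
  match_scalars <;> (field_simp; try ring)

private lemma aux_det_rank_one (Z : Matrix (Fin n) (Fin n) ℝ) (hZ : Z.PosDef) (v : Fin n → ℝ) :
    (Z + replicateCol Unit v * replicateRow Unit v).det = Z.det * (1 + v ⬝ᵥ Z⁻¹ *ᵥ v) := by
  have hdet : IsUnit Z.det := hZ.det_pos.ne'.isUnit
  rw [Matrix.det_add_replicateCol_mul_replicateRow hdet v v, aux_row_mul_col]
  congr 1
  rw [det_unique]
  simp

private lemma aux_step (Z X : Matrix (Fin n) (Fin n) ℝ) (hZ : Z.PosDef) (hX : X.PosDef)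
    (v : Fin n → ℝ) :
    Real.log X.det - Real.log Z.det - (Z⁻¹ * (X - Z)).trace ≤
      Real.log (X + replicateCol Unit v * replicateRow Unit v).det -
        Real.log (Z + replicateCol Unit v * replicateRow Unit v).det -
        ((Z + replicateCol Unit v * replicateRow Unit v)⁻¹ * (X - Z)).trace := by
  by_cases hv : v = 0
  · subst hv
    have h0 : (replicateCol Unit (0 : Fin n → ℝ) * replicateRow Unit (0 : Fin n → ℝ))
        = (0 : Matrix (Fin n) (Fin n) ℝ) := by
      ext i j; simp [Matrix.mul_apply]
    simp [h0]
  set q := v ⬝ᵥ Z⁻¹ *ᵥ v with hqdef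
  set p := v ⬝ᵥ X⁻¹ *ᵥ v with hpdef
  set r := v ⬝ᵥ ((Z⁻¹ * (X - Z) * Z⁻¹) *ᵥ v) with hrdef
  have hq : 0 < q := by simpa using hZ.inv.dotProduct_mulVec_pos hv
  have hp : 0 < p := by simpa using hX.inv.dotProduct_mulVec_pos hv
  have hZt : Zᵀ = Z := aux_transpose_eq Z hZ.isHermitian
  have hXt : Xᵀ = X := aux_transpose_eq X hX.isHermitian
  have hZit : (Z⁻¹)ᵀ = Z⁻¹ := by rw [Matrix.transpose_nonsing_inv, hZt]
  have hXit : (X⁻¹)ᵀ = X⁻¹ := by rw [Matrix.transpose_nonsing_inv, hXt]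
  have hXX : X * X⁻¹ = 1 := Matrix.mul_nonsing_inv X hX.det_pos.ne'.isUnit
  have hXX' : X⁻¹ * X = 1 := Matrix.nonsing_inv_mul X hX.det_pos.ne'.isUnit
  have hZZ' : Z⁻¹ * Z = 1 := Matrix.nonsing_inv_mul Z hZ.det_pos.ne'.isUnit
  -- Cauchy-Schwarz : q^2 ≤ p * (q + r)
  have hcs : q ^ 2 ≤ p * (q + r) := by
    have h1 := aux_cs X hX (X⁻¹ *ᵥ v) (Z⁻¹ *ᵥ v)
    have e_aa : (X⁻¹ *ᵥ v) ⬝ᵥ (X *ᵥ (X⁻¹ *ᵥ v)) = p := by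
      rw [aux_sandwich, hXit]
      rw [show X⁻¹ * X * X⁻¹ = X⁻¹ by rw [hXX', Matrix.one_mul]]
    have e_bb : (Z⁻¹ *ᵥ v) ⬝ᵥ (X *ᵥ (Z⁻¹ *ᵥ v)) = q + r := by
      rw [aux_sandwich, hZit]
      have : Z⁻¹ * X * Z⁻¹ = Z⁻¹ + Z⁻¹ * (X - Z) * Z⁻¹ := by
        rw [Matrix.mul_sub, Matrix.sub_mul, hZZ', Matrix.one_mul]
        abel
      rw [this, Matrix.add_mulVec, dotProduct_add, ← hqdef, ← hrdef]
    have e_ab : (X⁻¹ *ᵥ v) ⬝ᵥ (X *ᵥ (Z⁻¹ *ᵥ v)) = q := by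
      rw [Matrix.dotProduct_mulVec, ← Matrix.mulVec_transpose, hXt, mulVec_mulVec, hXX,
        one_mulVec]
    rw [e_aa, e_bb, e_ab] at h1
    exact h1
  -- determinant and trace rewrites
  have hdetX : Real.log (X + replicateCol Unit v * replicateRow Unit v).det
      = Real.log X.det + Real.log (1 + p) := by
    rw [aux_det_rank_one X hX v, ← hpdef, Real.log_mul hX.det_pos.ne' (by positivity)]
  have hdetZ : Real.log (Z + replicateCol Unit v * replicateRow Unit v).det
      = Real.log Z.det + Real.log (1 + q) := by
    rw [aux_det_rank_one Z hZ v, ← hqdef, Real.log_mul hZ.det_pos.ne' (by positivity)]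
  have htr : ((Z + replicateCol Unit v * replicateRow Unit v)⁻¹ * (X - Z)).trace
      = (Z⁻¹ * (X - Z)).trace - (1 + q)⁻¹ * r := by
    rw [aux_inv_rank_one Z hZ v hq.le, ← hqdef, Matrix.sub_mul, trace_sub, Matrix.smul_mul,
      trace_smul]
    have e : (Z⁻¹ * (replicateCol Unit v * replicateRow Unit v) * Z⁻¹ * (X - Z)).trace = r := by
      rw [show Z⁻¹ * (replicateCol Unit v * replicateRow Unit v) * Z⁻¹ * (X - Z)
          = Z⁻¹ * (replicateCol Unit v * replicateRow Unit v * (Z⁻¹ * (X - Z))) by simp only [Matrix.mul_assoc]]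
      rw [Matrix.trace_mul_comm]
      rw [show replicateCol Unit v * replicateRow Unit v * (Z⁻¹ * (X - Z)) * Z⁻¹
          = replicateCol Unit v * replicateRow Unit v * (Z⁻¹ * (X - Z) * Z⁻¹) by simp only [Matrix.mul_assoc]]
      rw [aux_trace_rank_one, hrdef]
    rw [e, smul_eq_mul]
  rw [hdetX, hdetZ, htr]
  have := aux_scalar p q r hp hq hcs
  linarith

private lemma aux_rank_one_psd (v : Fin n → ℝ) :
    (replicateCol Unit v * replicateRow Unit v : Matrix (Fin n) (Fin n) ℝ).PosSemidef := by
  have h : (replicateCol Unit v * replicateRow Unit v : Matrix (Fin n) (Fin n) ℝ)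
      = (replicateRow Unit v)ᴴ * replicateRow Unit v := by
    ext i j
    simp [Matrix.mul_apply, Matrix.conjTranspose_apply]
  rw [h]
  exact Matrix.posSemidef_conjTranspose_mul_self _

private lemma aux_main (C : Matrix (Fin n) (Fin n) ℝ) (hC : C.PosSemidef)
    (Z X : Matrix (Fin n) (Fin n) ℝ) (hZ : Z.PosDef) (hX : X.PosDef) :
    Real.log X.det - Real.log Z.det - (Z⁻¹ * (X - Z)).trace ≤
      Real.log (X + C).det - Real.log (Z + C).det - ((Z + C)⁻¹ * (X - Z)).trace := by
  obtain ⟨B, hB⟩ := by open scoped MatrixOrder in exact CStarAlgebra.nonneg_iff_eq_star_mul_self.mp hC.nonneg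
  suffices h : ∀ s : Finset (Fin n),
      (∑ i ∈ s, replicateCol Unit (B i) * replicateRow Unit (B i)).PosSemidef ∧
      Real.log X.det - Real.log Z.det - (Z⁻¹ * (X - Z)).trace ≤
        Real.log (X + ∑ i ∈ s, replicateCol Unit (B i) * replicateRow Unit (B i)).det -
        Real.log (Z + ∑ i ∈ s, replicateCol Unit (B i) * replicateRow Unit (B i)).det -
        ((Z + ∑ i ∈ s, replicateCol Unit (B i) * replicateRow Unit (B i))⁻¹ * (X - Z)).trace by
    have hCeq : C = ∑ i : Fin n, replicateCol Unit (B i) * replicateRow Unit (B i) := by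
      rw [hB]
      ext j k
      simp [Matrix.mul_apply, Matrix.sum_apply, Matrix.conjTranspose_apply]
    rw [hCeq]
    exact (h Finset.univ).2
  intro s
  induction s using Finset.induction_on with
  | empty => exact ⟨by simpa using Matrix.PosSemidef.zero, by simp⟩
  | insert a s ha ih =>
    rw [Finset.sum_insert ha]
    refine ⟨(aux_rank_one_psd (B a)).add ih.1, ?_⟩
    have hZ' := hZ.add_posSemidef ih.1
    have hX' := hX.add_posSemidef ih.1
    have hstep := aux_step (Z + ∑ i ∈ s, replicateCol Unit (B i) * replicateRow Unit (B i))
      (X + ∑ i ∈ s, replicateCol Unit (B i) * replicateRow Unit (B i)) hZ' hX' (B a)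
    have hd : (X + ∑ i ∈ s, replicateCol Unit (B i) * replicateRow Unit (B i))
        - (Z + ∑ i ∈ s, replicateCol Unit (B i) * replicateRow Unit (B i)) = X - Z := by abel
    rw [hd] at hstep
    have e1 : Z + (replicateCol Unit (B a) * replicateRow Unit (B a) + ∑ i ∈ s, replicateCol Unit (B i) * replicateRow Unit (B i))
        = (Z + ∑ i ∈ s, replicateCol Unit (B i) * replicateRow Unit (B i)) + replicateCol Unit (B a) * replicateRow Unit (B a) := by
      abel
    have e2 : X + (replicateCol Unit (B a) * replicateRow Unit (B a) + ∑ i ∈ s, replicateCol Unit (B i) * replicateRow Unit (B i))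
        = (X + ∑ i ∈ s, replicateCol Unit (B i) * replicateRow Unit (B i)) + replicateCol Unit (B a) * replicateRow Unit (B a) := by
      abel
    rw [e1, e2]
    exact le_trans ih.2 hstep

private lemma aux_smul_posDef {c : ℝ} (hc : 0 < c) {M : Matrix (Fin n) (Fin n) ℝ}
    (hM : M.PosDef) : (c • M).PosDef := by
  refine Matrix.PosDef.of_dotProduct_mulVec_pos ?_ ?_
  · rw [Matrix.IsHermitian, Matrix.conjTranspose_smul, hM.1.eq]
    simp
  · intro x hx
    rw [Matrix.smul_mulVec, dotProduct_smul, smul_eq_mul]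
    exact mul_pos hc (by simpa using hM.dotProduct_mulVec_pos hx)

theorem stmt7 {n : ℕ} (C : Matrix (Fin n) (Fin n) ℝ) (hC : C.PosSemidef)
    (X Y : Matrix (Fin n) (Fin n) ℝ) (hX : X.PosDef) (hY : Y.PosDef)
    (θ : ℝ) (hθ0 : 0 ≤ θ) (hθ1 : θ ≤ 1) :
    Real.log (θ • X + (1 - θ) • Y).det - Real.log ((θ • X + (1 - θ) • Y) + C).det
      ≥ θ * (Real.log X.det - Real.log (X + C).det)
        + (1 - θ) * (Real.log Y.det - Real.log (Y + C).det) := by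
  set Z := θ • X + (1 - θ) • Y with hZdef
  have hZ : Z.PosDef := by
    rcases eq_or_lt_of_le hθ0 with h0 | h0
    · rw [hZdef, ← h0]
      simpa using hY
    · rcases eq_or_lt_of_le hθ1 with h1 | h1
      · rw [hZdef, h1]
        simpa using hX
      · exact (aux_smul_posDef h0 hX).add (aux_smul_posDef (by linarith) hY)
  have hIX := aux_main C hC Z X hZ hX
  have hIY := aux_main C hC Z Y hZ hY
  have hvan : ∀ W : Matrix (Fin n) (Fin n) ℝ,
      θ * (W * (X - Z)).trace + (1 - θ) * (W * (Y - Z)).trace = 0 := by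
    intro W
    have hsum : θ • (X - Z) + (1 - θ) • (Y - Z) = (0 : Matrix (Fin n) (Fin n) ℝ) := by
      rw [hZdef]
      module
    calc θ * (W * (X - Z)).trace + (1 - θ) * (W * (Y - Z)).trace
        = (θ • (W * (X - Z)) + (1 - θ) • (W * (Y - Z))).trace := by
          rw [trace_add, trace_smul, trace_smul, smul_eq_mul, smul_eq_mul]
      _ = (W * (θ • (X - Z) + (1 - θ) • (Y - Z))).trace := by
          rw [Matrix.mul_add, Matrix.mul_smul, Matrix.mul_smul]
      _ = 0 := by rw [hsum, Matrix.mul_zero, trace_zero]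
  have h1 := hvan Z⁻¹
  have h2 := hvan (Z + C)⁻¹
  have hmX := mul_le_mul_of_nonneg_left hIX hθ0
  have hmY := mul_le_mul_of_nonneg_left hIY (by linarith : (0:ℝ) ≤ 1 - θ)
  linarith [hmX, hmY, h1, h2]
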